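/- Let ℒ : ℝ^d → ℝ be differentiable with finite infimum ℒ*, satisfying the PL inequality with constant δ > 0. Fix L > 0, ζ ≥ 1, c_g, c_h, α, σ_g, σ_h ≥ 0, integers K, B ≥ 1, and a step size η with 0 < η ≤ 2/(Lζc_g(1 + c_h)). Let (w_t)_{t≥0} evolve by w_{t+1} = w_t − ηG_t, where at each step t, conditionally on the past: E[ℒ(w_t − ηG_t)] ≤ ℒ(w_t) − η‖∇ℒ(w_t)‖² + (Lζη²/2)·E[‖G_t‖²] (the zeroth-order descent bound), and E[‖G_t‖²] ≤ c_g(1 + c_h)‖∇ℒ(w_t)‖² + (2ασ_g²/(KB))·(ℒ(w_t) − ℒ*) + c_g σ_h². Set A₂ = 2δη − Lζδη²c_g(1 + c_h) − Lζασ_g²η²/(KB) and C₂ = Lζc_gσ_h²η²/2, and assume 0 < A₂ < 1. Then for all t ≥ 0, E[ℒ(w_t)] − ℒ* − C₂/A₂ ≤ (1 − A₂)^t·(ℒ(w_0) − ℒ* − C₂/A₂); in particular, if ℒ(w_0) − ℒ* > C₂/A₂ and ε > 0, the gap to the error floor C₂/A₂ is at most ε after t ≥ (1/A₂)·log((ℒ(w_0)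 − ℒ* − C₂/A₂)/ε) steps. (Global convergence of ZO-FedSGD, Theorem 1.) -/

import Mathlib

set_option maxHeartbeats 1000000


open MeasureTheory ProbabilityTheory RealInnerProductSpace

/-- **Global convergence of ZO-FedSGD (Theorem 1).** Under the PL inequality, the per-step
zeroth-order descent bound (with low-effective-rank factor `ζ`) and the combined
second-moment bound, both conditional on the past `ℱ t`, the iterates
`w (t+1) = w t - η • G t` satisfy
`E[ℒ(w_t)] - ℒ* - C₂/A₂ ≤ (1 - A₂)^t (ℒ(w_0) - ℒ* - C₂/A₂)`, and the gap to the error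
floor `C₂/A₂` is at most `ε` after `(1/A₂) log((ℒ(w_0) - ℒ* - C₂/A₂)/ε)` steps. -/
theorem stmt_17 {d : ℕ} (ℒ : EuclideanSpace ℝ (Fin d) → ℝ) (Lstar δ L ζ : ℝ)
    (hdiff : Differentiable ℝ ℒ)
    (hinf : IsGLB (Set.range ℒ) Lstar)
    (hδ : 0 < δ)
    (hPL : ∀ v : EuclideanSpace ℝ (Fin d), ‖gradient ℒ v‖ ^ 2 ≥ 2 * δ * (ℒ v - Lstar))
    (hL : 0 < L) (hζ : 1 ≤ ζ)
    (c_g c_h α σ_g σ_h : ℝ) (hcg : 0 ≤ c_g) (hch : 0 ≤ c_h) (hα : 0 ≤ α)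
    (hσg : 0 ≤ σ_g) (hσh : 0 ≤ σ_h)
    (K B : ℕ) (hK : 1 ≤ K) (hB : 1 ≤ B)
    (η : ℝ) (hη0 : 0 < η) (hη : η ≤ 2 / (L * ζ * c_g * (1 + c_h)))
    {Ω : Type*} {m : MeasurableSpace Ω} (P : Measure Ω) [IsProbabilityMeasure P]
    (ℱ : Filtration ℕ m)
    (w : ℕ → Ω → EuclideanSpace ℝ (Fin d)) (G : ℕ → Ω → EuclideanSpace ℝ (Fin d))
    (w0 : EuclideanSpace ℝ (Fin d)) (hw0 : ∀ ω, w 0 ω = w0)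
    (hupdate : ∀ t ω, w (t + 1) ω = w t ω - η • G t ω)
    (hadapted : ∀ t, StronglyMeasurable[ℱ t] (w t))
    (hG2 : ∀ t, MemLp (G t) 2 P)
    (hint : ∀ t, Integrable (fun ω => ℒ (w t ω)) P)
    (hdescent : ∀ t, ∀ᵐ ω ∂P,
      (P[(fun ω' => ℒ (w t ω' - η • G t ω')) | ℱ t]) ω ≤
        ℒ (w t ω) - η * ‖gradient ℒ (w t ω)‖ ^ 2
          + L * ζ * η ^ 2 / 2 * (P[(fun ω' => ‖G t ω'‖ ^ 2) | ℱ t]) ω)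
    (hsecond : ∀ t, ∀ᵐ ω ∂P,
      (P[(fun ω' => ‖G t ω'‖ ^ 2) | ℱ t]) ω ≤
        c_g * (1 + c_h) * ‖gradient ℒ (w t ω)‖ ^ 2
          + (2 * α * σ_g ^ 2 / (K * B)) * (ℒ (w t ω) - Lstar) + c_g * σ_h ^ 2)
    (A₂ C₂ : ℝ)
    (hA₂def : A₂ = 2 * δ * η - L * ζ * δ * η ^ 2 * c_g * (1 + c_h)
        - L * ζ * α * σ_g ^ 2 * η ^ 2 / (K * B))
    (hC₂def : C₂ = L * ζ * c_g * σ_h ^ 2 * η ^ 2 / 2)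
    (hA₂0 : 0 < A₂) (hA₂1 : A₂ < 1) :
    (∀ t : ℕ, (∫ ω, ℒ (w t ω) ∂P) - Lstar - C₂ / A₂ ≤
        (1 - A₂) ^ t * (ℒ w0 - Lstar - C₂ / A₂)) ∧
      (ℒ w0 - Lstar > C₂ / A₂ → ∀ ε : ℝ, 0 < ε →
        ∀ t : ℕ, (1 / A₂) * Real.log ((ℒ w0 - Lstar - C₂ / A₂) / ε) ≤ (t : ℝ) →
          (∫ ω, ℒ (w t ω) ∂P) - Lstar - C₂ / A₂ ≤ ε) := by
  have hKB : (0:ℝ) < (K:ℝ) * (B:ℝ) := by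
    have : (1:ℝ) ≤ (K:ℝ) := by exact_mod_cast hK
    have : (1:ℝ) ≤ (B:ℝ) := by exact_mod_cast hB
    nlinarith [show (1:ℝ) ≤ (K:ℝ) from by exact_mod_cast hK]
  have hch1 : (0:ℝ) < 1 + c_h := by linarith
  have hD : 0 < L * ζ * c_g * (1 + c_h) := by
    rcases (by positivity : (0:ℝ) ≤ L * ζ * c_g * (1 + c_h)).lt_or_eq with h | h
    · exact h
    · exfalso; rw [← h] at hη; simp at hη; linarith
  have hηD : η * (L * ζ * c_g * (1 + c_h)) ≤ 2 := by
    rw [le_div_iff₀ hD] at hη; linarith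
  have hK1 : 0 ≤ η - L * ζ * η ^ 2 / 2 * (c_g * (1 + c_h)) := by nlinarith
  have hgap : ∀ v, 0 ≤ ℒ v - Lstar := fun v => by
    have := hinf.1 (Set.mem_range_self v); linarith
  -- one-step contraction
  have key : ∀ t : ℕ, (∫ ω, ℒ (w (t+1) ω) ∂P) - Lstar - C₂ / A₂ ≤
      (1 - A₂) * ((∫ ω, ℒ (w t ω) ∂P) - Lstar - C₂ / A₂) := by
    intro t
    have hrw : (fun ω' => ℒ (w t ω' - η • G t ω')) = fun ω' => ℒ (w (t+1) ω') :=
      funext fun ω' => by rw [hupdate]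
    have hdes := hdescent t
    rw [hrw] at hdes
    have hc : (0:ℝ) ≤ L * ζ * η ^ 2 / 2 := by positivity
    have e1 : L * ζ * η ^ 2 / 2 * (2 * α * σ_g ^ 2 / ((K:ℝ) * B)) =
        L * ζ * α * σ_g ^ 2 * η ^ 2 / ((K:ℝ) * B) := by
      field_simp
    have hpt : ∀ᵐ ω ∂P, (P[(fun ω' => ℒ (w (t+1) ω')) | ℱ t]) ω ≤
        (1 - A₂) * (ℒ (w t ω) - Lstar) + Lstar + C₂ := by
      filter_upwards [hdes, hsecond t] with ω h1 h2
      have hg := hPL (w t ω)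
      have hga := hgap (w t ω)
      set E := (P[(fun ω' => ℒ (w (t+1) ω')) | ℱ t]) ω with hE
      set S := (P[(fun ω' => ‖G t ω'‖ ^ 2) | ℱ t]) ω with hS
      set g := ‖gradient ℒ (w t ω)‖ ^ 2 with hgdef
      set a := ℒ (w t ω) with hadef
      clear_value E S g a
      clear hE hS hgdef hadef hdes hw0 hupdate hadapted hG2 hint hdescent hsecond hinf hPL hgap hrw
      have h3 := mul_le_mul_of_nonneg_left h2 hc
      have h4 := mul_le_mul_of_nonneg_left hg hK1
      rw [hA₂def, hC₂def]
      nlinarith [h3, h4, e1]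
    have hintR : Integrable (fun ω => (1 - A₂) * (ℒ (w t ω) - Lstar) + Lstar + C₂) P :=
      ((((hint t).sub (integrable_const Lstar)).const_mul _).add
        (integrable_const Lstar)).add (integrable_const C₂)
    have hmono := integral_mono_ae integrable_condExp hintR hpt
    rw [integral_condExp (ℱ.le t)] at hmono
    have hcalc : ∫ ω, ((1 - A₂) * (ℒ (w t ω) - Lstar) + Lstar + C₂) ∂P =
        (1 - A₂) * ((∫ ω, ℒ (w t ω) ∂P) - Lstar) + Lstar + C₂ := by
      have hfe : (fun ω => (1 - A₂) * (ℒ (w t ω) - Lstar) + Lstar + C₂) =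
          fun ω => (1 - A₂) * ℒ (w t ω) + ((1 - A₂) * (-Lstar) + Lstar + C₂) := by
        funext ω; ring
      rw [hfe, integral_add ((hint t).const_mul _) (integrable_const _),
        integral_const_mul, integral_const]
      simp [measure_univ]; ring
    rw [hcalc] at hmono
    have hfloor : C₂ - C₂ / A₂ + (1 - A₂) * (C₂ / A₂) = 0 := by
      field_simp; ring
    linarith
  have hbase : (∫ ω, ℒ (w 0 ω) ∂P) = ℒ w0 := by
    have : (fun ω => ℒ (w 0 ω)) = fun _ => ℒ w0 := funext fun ω => by rw [hw0]
    rw [this]; simp [measure_univ]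
  have h1A : (0:ℝ) ≤ 1 - A₂ := by linarith
  have main : ∀ t : ℕ, (∫ ω, ℒ (w t ω) ∂P) - Lstar - C₂ / A₂ ≤
      (1 - A₂) ^ t * (ℒ w0 - Lstar - C₂ / A₂) := by
    intro t
    induction t with
    | zero => simp [hbase]
    | succ t ih =>
      calc (∫ ω, ℒ (w (t+1) ω) ∂P) - Lstar - C₂ / A₂
          ≤ (1 - A₂) * ((∫ ω, ℒ (w t ω) ∂P) - Lstar - C₂ / A₂) := key t
        _ ≤ (1 - A₂) * ((1 - A₂) ^ t * (ℒ w0 - Lstar - C₂ / A₂)) :=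
            mul_le_mul_of_nonneg_left ih h1A
        _ = (1 - A₂) ^ (t+1) * (ℒ w0 - Lstar - C₂ / A₂) := by ring
  refine ⟨main, fun hD0 ε hε t ht => ?_⟩
  have hD0' : 0 < ℒ w0 - Lstar - C₂ / A₂ := by linarith
  have hexp : (1 - A₂) ^ t ≤ Real.exp (-A₂ * t) := by
    calc (1 - A₂) ^ t ≤ (Real.exp (-A₂)) ^ t :=
          pow_le_pow_left₀ h1A (by linarith [Real.add_one_le_exp (-A₂)]) t
      _ = Real.exp (-A₂ * t) := by rw [← Real.exp_nat_mul]; ring_nf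
  have hlog : Real.log ((ℒ w0 - Lstar - C₂ / A₂) / ε) ≤ A₂ * t := by
    have := mul_le_mul_of_nonneg_left ht (le_of_lt hA₂0)
    rw [mul_comm A₂] at this ⊢
    calc Real.log ((ℒ w0 - Lstar - C₂ / A₂) / ε)
        = A₂ * (1 / A₂ * Real.log ((ℒ w0 - Lstar - C₂ / A₂) / ε)) := by
          field_simp
      _ ≤ A₂ * t := by
          rw [mul_comm A₂] at this; exact mul_le_mul_of_nonneg_left ht (le_of_lt hA₂0)
      _ = t * A₂ := mul_comm _ _
  have hbound : (1 - A₂) ^ t * (ℒ w0 - Lstar - C₂ / A₂) ≤ ε := by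
    have h5 : Real.exp (-A₂ * t) ≤ ε / (ℒ w0 - Lstar - C₂ / A₂) := by
      rw [show ε / (ℒ w0 - Lstar - C₂ / A₂) =
          Real.exp (Real.log (ε / (ℒ w0 - Lstar - C₂ / A₂))) from
          (Real.exp_log (by positivity)).symm]
      apply Real.exp_le_exp.mpr
      rw [Real.log_div (ne_of_gt hε) (ne_of_gt hD0')]
      rw [Real.log_div (ne_of_gt hD0') (ne_of_gt hε)] at hlog
      linarith
    calc (1 - A₂) ^ t * (ℒ w0 - Lstar - C₂ / A₂)
        ≤ Real.exp (-A₂ * t) * (ℒ w0 - Lstar - C₂ / A₂) :=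
          mul_le_mul_of_nonneg_right hexp (le_of_lt hD0')
      _ ≤ (ε / (ℒ w0 - Lstar - C₂ / A₂)) * (ℒ w0 - Lstar - C₂ / A₂) :=
          mul_le_mul_of_nonneg_right h5 (le_of_lt hD0')
      _ = ε := div_mul_cancel₀ ε (ne_of_gt hD0')
  linarith [main t]
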